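/- Fix p ∈ (0,1) with 3/(1−p) = n+1 for some natural n ≥ 3, and let ρ > 0 and d > d_* = ρ^p·p^p·(1−p)^{1−p}. Then the polynomial Q(u) = −(1−p)²·u^{n+1} + d·u³ − ρ·p² has exactly two positive real roots 0 < β < α, with Q > 0 on (β, α) and Q < 0 on (0, β) ∪ (α, ∞). -/

import Mathlib

theorem stmt_6 (p ρ d : ℝ) (n : ℕ) (hn : 3 ≤ n)
    (hp : 0 < p) (hp1 : p < 1) (hpn : 3 / (1 - p) = (n : ℝ) + 1)
    (hρ : 0 < ρ) (hd : ρ ^ p * p ^ p * (1 - p) ^ (1 - p) < d) :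
    ∃ α β : ℝ, 0 < β ∧ β < α ∧
      (-(1 - p) ^ 2 * β ^ (n + 1) + d * β ^ 3 - ρ * p ^ 2 = 0) ∧
      (-(1 - p) ^ 2 * α ^ (n + 1) + d * α ^ 3 - ρ * p ^ 2 = 0) ∧
      (∀ u : ℝ, β < u → u < α → 0 < -(1 - p) ^ 2 * u ^ (n + 1) + d * u ^ 3 - ρ * p ^ 2) ∧
      (∀ u : ℝ, 0 < u → u < β → -(1 - p) ^ 2 * u ^ (n + 1) + d * u ^ 3 - ρ * p ^ 2 < 0) ∧
      (∀ u : ℝ, α < u → -(1 - p) ^ 2 * u ^ (n + 1) + d * u ^ 3 - ρ * p ^ 2 < 0) := by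
  have hp1' : 0 < 1 - p := by linarith
  have hn1 : (0:ℝ) < (n:ℝ) + 1 := by positivity
  have h3 : (1 - p) * ((n:ℝ) + 1) = 3 := by
    field_simp at hpn; linarith
  have hqdef : p * ((n:ℝ) + 1) = (n:ℝ) - 2 := by nlinarith [h3]
  set q : ℝ := (n:ℝ) - 2 with hq_def
  have hq0 : (0:ℝ) < q := by
    have : (3:ℝ) ≤ (n:ℝ) := by exact_mod_cast hn
    simp only [hq_def]; linarith
  have hqn : ((n - 2 : ℕ) : ℝ) = q := by
    have := Nat.cast_sub (by omega : 2 ≤ n) (R := ℝ)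
    simp [this, hq_def]
  have hn2 : n - 2 ≠ 0 := by omega
  have h3q : 3 / q = (1 - p) / p := by
    rw [div_eq_div_iff hq0.ne' hp.ne']
    nlinarith [h3, hqdef]
  -- key: nat power of rpow
  have key : ∀ b : ℝ, 0 < b → (b ^ ((1:ℝ)/q)) ^ (n - 2 : ℕ) = b := by
    intro b hb
    rw [← Real.rpow_natCast (b ^ ((1:ℝ)/q)) (n-2), ← Real.rpow_mul hb.le, hqn,
      one_div_mul_cancel hq0.ne', Real.rpow_one]
  set D : ℝ := ρ ^ p * p ^ p * (1 - p) ^ (1 - p) with hD_def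
  have hD : 0 < D := by
    simp only [hD_def]; positivity
  have hd' : D < d := hd
  have hdpos : 0 < d := hD.trans hd'
  set x : ℝ := ρ * p with hx_def
  have hx : 0 < x := mul_pos hρ hp
  have h1p : (1 - p) ^ (1 - p) * (1 - p) ^ p = 1 - p := by
    rw [← Real.rpow_add hp1']
    norm_num
  have hDx : D = x ^ p * (1 - p) ^ (1 - p) := by
    rw [hD_def, hx_def, ← Real.mul_rpow hρ.le hp.le]
  have hb : D / (1 - p) = (x / (1 - p)) ^ p := by
    rw [hDx, Real.div_rpow hx.le hp1'.le]
    rw [div_eq_div_iff hp1'.ne' (by positivity : ((1:ℝ)-p) ^ p ≠ 0)]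
    linear_combination x ^ p * h1p
  set u₀ : ℝ := (D / (1 - p)) ^ ((1:ℝ)/q) with hu₀_def
  have hbpos : 0 < D / (1 - p) := div_pos hD hp1'
  have hu₀ : 0 < u₀ := Real.rpow_pos_of_pos hbpos _
  have K1 : u₀ ^ (n - 2 : ℕ) = D / (1 - p) := key _ hbpos
  have K2 : u₀ ^ (3 : ℕ) = (D / (1 - p)) ^ ((1 - p)/p) := by
    rw [hu₀_def, ← Real.rpow_natCast ((D/(1-p)) ^ ((1:ℝ)/q)) 3, ← Real.rpow_mul hbpos.le,
      show (1:ℝ)/q * ((3:ℕ):ℝ) = (1-p)/p by rw [← h3q]; push_cast; ring]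
  have K3 : D * (D / (1 - p)) ^ ((1 - p)/p) = ρ * p := by
    rw [hb, ← Real.rpow_mul (by positivity : (0:ℝ) ≤ x / (1-p)),
      mul_div_cancel₀ _ hp.ne', Real.div_rpow hx.le hp1'.le, hDx]
    have hxx : x ^ p * x ^ (1-p) = x := by
      rw [← Real.rpow_add hx]
      norm_num
    rw [← hx_def]
    field_simp
    linear_combination hxx + hx_def
  set f : ℝ → ℝ := fun u => -(1 - p) ^ 2 * u ^ (n + 1) + d * u ^ 3 - ρ * p ^ 2 with hf_def
  have hsplit : ∀ u : ℝ, u ^ (n + 1) = u ^ (n - 2) * u ^ 3 := by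
    intro u
    rw [← pow_add]
    congr 1
    omega
  have hDu : D * u₀ ^ 3 = ρ * p := by rw [K2]; exact K3
  have hfu₀ : 0 < f u₀ := by
    have h1 : f u₀ = d * u₀ ^ 3 - ρ * p := by
      simp only [hf_def]
      rw [hsplit u₀, K1]
      have : -(1-p)^2 * (D / (1-p) * u₀ ^ 3) = -(1-p) * (D * u₀ ^ 3) := by
        field_simp
      rw [this, hDu]
      ring
    rw [h1]
    have h2 : D * u₀ ^ 3 < d * u₀ ^ 3 := by
      exact mul_lt_mul_of_pos_right hd' (by positivity)
    linarith [hDu]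
  -- critical point
  set c : ℝ := 3 * d / (((n:ℝ) + 1) * (1 - p) ^ 2) with hc_def
  have hcpos : 0 < c := by simp only [hc_def]; positivity
  set u₁ : ℝ := c ^ ((1:ℝ)/q) with hu₁_def
  have hu₁ : 0 < u₁ := Real.rpow_pos_of_pos hcpos _
  have K4 : u₁ ^ (n - 2 : ℕ) = c := key _ hcpos
  -- derivative
  have hderiv : ∀ u : ℝ, HasDerivAt f (-(1-p)^2 * (((n:ℝ)+1) * u ^ n) + d * (3 * u ^ 2)) u := by
    intro u
    have h1 := (hasDerivAt_pow (n+1) u).const_mul (-(1-p)^2)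
    have h2 := (hasDerivAt_pow 3 u).const_mul d
    have h3 := (h1.add h2).sub_const (ρ * p ^ 2)
    refine h3.congr_deriv ?_
    simp only [Nat.add_sub_cancel]
    push_cast
    ring_nf
  have hcont : Continuous f := by
    simp only [hf_def]
    exact ((continuous_const.mul (continuous_pow _)).add
      (continuous_const.mul (continuous_pow _))).sub continuous_const
  have hmono : StrictMonoOn f (Set.Icc 0 u₁) := by
    apply strictMonoOn_of_deriv_pos (convex_Icc _ _) hcont.continuousOn
    intro u hu
    rw [interior_Icc] at hu
    rw [(hderiv u).deriv]
    have h5 : u ^ (n - 2) < u₁ ^ (n - 2) := by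
      exact pow_lt_pow_left₀ hu.2 hu.1.le hn2
    rw [K4, hc_def, lt_div_iff₀ (by positivity)] at h5
    have hun : u ^ n = u ^ (n - 2) * u ^ 2 := by
      rw [← pow_add]; congr 1; omega
    rw [hun]
    have h6 := mul_lt_mul_of_pos_right h5 (pow_pos hu.1 2)
    have h7 : -(1-p)^2 * (((n:ℝ)+1) * (u^(n-2)*u^2)) + d*(3*u^2)
        = 3*d*u^2 - u^(n-2) * (((n:ℝ)+1)*(1-p)^2) * u^2 := by ring
    rw [h7]
    linarith [h6]
  have hanti : StrictAntiOn f (Set.Ici u₁) := by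
    apply strictAntiOn_of_deriv_neg (convex_Ici _) hcont.continuousOn
    intro u hu
    rw [interior_Ici] at hu
    rw [(hderiv u).deriv]
    have hupos : 0 < u := hu₁.trans hu
    have h5 : u₁ ^ (n - 2) < u ^ (n - 2) := by
      exact pow_lt_pow_left₀ hu hu₁.le hn2
    rw [K4, hc_def, div_lt_iff₀ (by positivity)] at h5
    have hun : u ^ n = u ^ (n - 2) * u ^ 2 := by
      rw [← pow_add]; congr 1; omega
    rw [hun]
    have h6 := mul_lt_mul_of_pos_right h5 (pow_pos hupos 2)
    have h7 : -(1-p)^2 * (((n:ℝ)+1) * (u^(n-2)*u^2)) + d*(3*u^2)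
        = 3*d*u^2 - u^(n-2) * (((n:ℝ)+1)*(1-p)^2) * u^2 := by ring
    rw [h7]
    linarith [h6]
  -- f is positive at the critical point
  have hfu₁ : 0 < f u₁ := by
    rcases le_total u₀ u₁ with h | h
    · exact hfu₀.trans_le (hmono.monotoneOn ⟨hu₀.le, h⟩ ⟨hu₁.le, le_refl _⟩ h)
    · exact hfu₀.trans_le (hanti.antitoneOn (Set.self_mem_Ici) h h)
  have hf0 : f 0 < 0 := by
    simp only [hf_def]
    rw [zero_pow (by omega : n + 1 ≠ 0), zero_pow (by norm_num : (3:ℕ) ≠ 0)]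
    have := mul_pos hρ (pow_pos hp 2)
    linarith
  -- a large point where f is negative
  set w : ℝ := (d / (1 - p) ^ 2) ^ ((1:ℝ)/q) with hw_def
  have hwpos : 0 < w := Real.rpow_pos_of_pos (by positivity) _
  have K5 : w ^ (n - 2 : ℕ) = d / (1 - p) ^ 2 := key _ (by positivity)
  set M : ℝ := u₁ + w + 1 with hM_def
  have hMw : w < M := by simp only [hM_def]; linarith
  have hMu₁ : u₁ < M := by simp only [hM_def]; linarith
  have hMpos : 0 < M := hwpos.trans hMw
  have hfM : f M < 0 := by
    have h5 : w ^ (n - 2) < M ^ (n - 2) := pow_lt_pow_left₀ hMw hwpos.le hn2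
    rw [K5, div_lt_iff₀ (by positivity)] at h5
    simp only [hf_def]
    rw [hsplit M]
    have h6 := mul_lt_mul_of_pos_right h5 (pow_pos hMpos 3)
    have h7 : -(1-p)^2 * (M^(n-2) * M^3) + d * M^3 - ρ*p^2
        = d * M^3 - M^(n-2)*(1-p)^2 * M^3 - ρ*p^2 := by ring
    rw [h7]
    have h8 : (0:ℝ) < ρ * p ^ 2 := mul_pos hρ (pow_pos hp 2)
    have h9 : M ^ (n-2) * (1-p)^2 * M^3 = (1-p)^2 * M^(n-2) * M^3 := by ring
    rw [h9] at h6 ⊢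
    linarith [h6, h8]
  -- IVT for β
  obtain ⟨β, hβmem, hβroot⟩ : ∃ β ∈ Set.Icc (0:ℝ) u₁, f β = 0 := by
    have h := intermediate_value_Icc hu₁.le hcont.continuousOn
    have : (0:ℝ) ∈ Set.Icc (f 0) (f u₁) := ⟨hf0.le, hfu₁.le⟩
    obtain ⟨β, hβ, hβ'⟩ := h this
    exact ⟨β, hβ, hβ'⟩
  -- IVT for α
  obtain ⟨α, hαmem, hαroot⟩ : ∃ α ∈ Set.Icc u₁ M, f α = 0 := by
    have h := intermediate_value_Icc' hMu₁.le hcont.continuousOn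
    have : (0:ℝ) ∈ Set.Icc (f M) (f u₁) := ⟨hfM.le, hfu₁.le⟩
    obtain ⟨α, hα, hα'⟩ := h this
    exact ⟨α, hα, hα'⟩
  have hβ0 : 0 < β := by
    rcases hβmem.1.lt_or_eq with h | h
    · exact h
    · exfalso; rw [← h] at hβroot; linarith
  have hβu₁ : β < u₁ := by
    rcases hβmem.2.lt_or_eq with h | h
    · exact h
    · exfalso; rw [h] at hβroot; linarith
  have hαu₁ : u₁ < α := by
    rcases hαmem.1.lt_or_eq with h | h
    · exact h
    · exfalso; rw [h] at hfu₁; linarith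
  have hβα : β < α := hβu₁.trans hαu₁
  refine ⟨α, β, hβ0, hβα, hβroot, hαroot, ?_, ?_, ?_⟩
  · intro u h1 h2
    rcases le_or_gt u u₁ with h | h
    · have := hmono ⟨hβ0.le, hβu₁.le⟩ ⟨(hβ0.trans h1).le, h⟩ h1
      rw [hβroot] at this
      exact this
    · have := hanti (Set.mem_Ici.mpr h.le) (Set.mem_Ici.mpr hαu₁.le) h2
      rw [hαroot] at this
      exact this
  · intro u h0 h1
    have := hmono ⟨h0.le, (h1.trans hβu₁).le⟩ ⟨hβ0.le, hβu₁.le⟩ h1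
    rw [hβroot] at this
    exact this
  · intro u h1
    have := hanti (Set.mem_Ici.mpr hαu₁.le) (Set.mem_Ici.mpr (hαu₁.trans h1).le) h1
    rw [hαroot] at this
    exact this
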